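/- arXiv:math/0207309 — 3 statements merged into one kernel-verified Lean document; each statement's English description precedes it below -/
import Mathlib

section
/- Let ℓ be a prime and let X and Y be pure submodules of a free ℤ_ℓ-module T of finite rank. If X̄ ∩ Ȳ = 0 in T/ℓT, then X + Y is a pure submodule of T and the sum is direct, i.e. X ∩ Y = 0. [Lemma 3.8(iv)] -/
open Pointwise

private lemma padic_eq_zero_of_forall_pow_dvd {ℓ : ℕ} [Fact (Nat.Prime ℓ)]
    (c : ℤ_[ℓ]) (h : ∀ n : ℕ, (ℓ : ℤ_[ℓ]) ^ n ∣ c) : c = 0 := by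
  by_contra hc
  have hval : ∀ n : ℕ, (n : ℤ) ≤ c.valuation := fun n => by
    exact_mod_cast (PadicInt.mem_span_pow_iff_le_valuation c hc n).mp (Ideal.mem_span_singleton.mpr (h n))
  have h1 := hval (c.valuation + 1)
  have h2 : c.valuation ≤ c.valuation := le_refl _
  push_cast at h1
  omega

/-- Lemma 3.8(iv): if `X`, `Y` are pure submodules of a free `ℤ_ℓ`-module `T` of
finite rank and `X̄ ⊓ Ȳ = 0` in `T/ℓT`, then `X + Y` is pure and the sum is direct. -/
theorem brumer_kramer_lemma_3_8_iv
    {ℓ : ℕ} [Fact (Nat.Prime ℓ)] {T : Type*} [AddCommGroup T] [Module ℤ_[ℓ] T]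
    [Module.Free ℤ_[ℓ] T] [Module.Finite ℤ_[ℓ] T]
    (X Y : Submodule ℤ_[ℓ] T)
    (hX : NoZeroSMulDivisors ℤ_[ℓ] (T ⧸ X)) (hY : NoZeroSMulDivisors ℤ_[ℓ] (T ⧸ Y))
    (ℓT : Submodule ℤ_[ℓ] T) (hℓT : ℓT = (ℓ : ℤ_[ℓ]) • (⊤ : Submodule ℤ_[ℓ] T))
    (hbar : X.map ℓT.mkQ ⊓ Y.map ℓT.mkQ = ⊥) :
    NoZeroSMulDivisors ℤ_[ℓ] (T ⧸ (X ⊔ Y)) ∧ X ⊓ Y = ⊥ := by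
  have hℓ0 : (ℓ : ℤ_[ℓ]) ≠ 0 := by
    exact_mod_cast (Fact.out : Nat.Prime ℓ).ne_zero
  -- membership in ℓT
  have hmemℓT : ∀ z : T, z ∈ ℓT ↔ ∃ s, (ℓ : ℤ_[ℓ]) • s = z := by
    intro z
    rw [hℓT]
    constructor
    · intro h
      obtain ⟨y, -, hy⟩ := Set.mem_smul_set.mp
        (by rwa [← SetLike.mem_coe, Submodule.coe_pointwise_smul] at h)
      exact ⟨y, hy⟩
    · rintro ⟨s, rfl⟩
      exact Submodule.smul_mem_pointwise_smul s _ ⊤ trivial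
  -- purity step for a pure submodule
  have hpure : ∀ (Z : Submodule ℤ_[ℓ] T), NoZeroSMulDivisors ℤ_[ℓ] (T ⧸ Z) →
      ∀ s : T, (ℓ : ℤ_[ℓ]) • s ∈ Z → s ∈ Z := by
    intro Z hZ s hs
    have h0 : (ℓ : ℤ_[ℓ]) • Z.mkQ s = 0 := by
      rw [← map_smul, Submodule.mkQ_apply, Submodule.Quotient.mk_eq_zero]
      exact hs
    rcases smul_eq_zero.mp h0 with h | h
    · exact absurd h hℓ0
    · rwa [Submodule.mkQ_apply, Submodule.Quotient.mk_eq_zero] at h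
  -- consequence of hbar
  have hbar' : ∀ x ∈ X, ∀ y ∈ Y, ℓT.mkQ x = ℓT.mkQ y → x ∈ ℓT ∧ y ∈ ℓT := by
    intro x hx y hy hxy
    have h1 : ℓT.mkQ x ∈ X.map ℓT.mkQ ⊓ Y.map ℓT.mkQ :=
      ⟨⟨x, hx, rfl⟩, hxy ▸ ⟨y, hy, rfl⟩⟩
    rw [hbar, Submodule.mem_bot] at h1
    have hx' : x ∈ ℓT := by
      rwa [Submodule.mkQ_apply, Submodule.Quotient.mk_eq_zero] at h1
    have h2 : ℓT.mkQ y = 0 := hxy ▸ h1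
    have hy' : y ∈ ℓT := by
      rwa [Submodule.mkQ_apply, Submodule.Quotient.mk_eq_zero] at h2
    exact ⟨hx', hy'⟩
  -- the key step : no ℓ-torsion in T ⧸ (X ⊔ Y)
  have hstep : ∀ t : T, (ℓ : ℤ_[ℓ]) • t ∈ X ⊔ Y → t ∈ X ⊔ Y := by
    intro t ht
    obtain ⟨x, hx, y, hy, hxy⟩ := Submodule.mem_sup.mp ht
    have hℓt : (ℓ : ℤ_[ℓ]) • t ∈ ℓT := (hmemℓT _).mpr ⟨t, rfl⟩
    have hq : ℓT.mkQ x = ℓT.mkQ (-y) := by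
      rw [eq_comm, ← sub_eq_zero, ← map_sub, Submodule.mkQ_apply,
        Submodule.Quotient.mk_eq_zero]
      have h3 : -y - x = -(x + y) := by abel
      rw [h3, hxy]
      exact ℓT.neg_mem hℓt
    obtain ⟨hxℓ, hyℓ⟩ := hbar' x hx (-y) (Y.neg_mem hy) hq
    obtain ⟨x', hx'⟩ := (hmemℓT x).mp hxℓ
    obtain ⟨y', hy'⟩ := (hmemℓT (-y)).mp hyℓ
    have hx'X : x' ∈ X := hpure X hX x' (hx' ▸ hx)
    have hy'Y : (-y') ∈ Y := by
      refine hpure Y hY (-y') ?_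
      rw [smul_neg, hy', neg_neg]
      exact hy
    have heq : (ℓ : ℤ_[ℓ]) • t = (ℓ : ℤ_[ℓ]) • (x' + -y') := by
      rw [smul_add, hx', smul_neg, hy', neg_neg, hxy]
    have ht' : t = x' + -y' := smul_right_injective T hℓ0 heq
    exact Submodule.mem_sup.mpr ⟨x', hx'X, -y', hy'Y, ht'.symm⟩
  have hstepn : ∀ (n : ℕ) (t : T), (ℓ : ℤ_[ℓ]) ^ n • t ∈ X ⊔ Y → t ∈ X ⊔ Y := by
    intro n
    induction n with
    | zero => intro t ht; simpa using ht
    | succ n ih =>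
      intro t ht
      have : (ℓ : ℤ_[ℓ]) ^ n • ((ℓ : ℤ_[ℓ]) • t) ∈ X ⊔ Y := by
        rwa [pow_succ, mul_smul] at ht
      exact hstep t (ih _ this)
  constructor
  · -- torsion-freeness
    refine ⟨fun {a} {q} h => ?_⟩
    by_cases ha : a = 0
    · exact Or.inl ha
    right
    obtain ⟨t, rfl⟩ := Submodule.Quotient.mk_surjective _ q
    rw [← Submodule.Quotient.mk_smul, Submodule.Quotient.mk_eq_zero] at h
    rw [Submodule.Quotient.mk_eq_zero]
    have hspec := PadicInt.unitCoeff_spec ha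
    set u := PadicInt.unitCoeff ha with hu
    set n := a.valuation with hn
    have h2 : (ℓ : ℤ_[ℓ]) ^ n • ((u : ℤ_[ℓ]) • t) ∈ X ⊔ Y := by
      rw [← mul_smul, mul_comm, ← hspec]
      exact h
    have h3 : (u : ℤ_[ℓ]) • t ∈ X ⊔ Y := hstepn n _ h2
    have h4 : ((u⁻¹ : ℤ_[ℓ]ˣ) : ℤ_[ℓ]) • ((u : ℤ_[ℓ]) • t) ∈ X ⊔ Y :=
      Submodule.smul_mem _ _ h3
    rwa [← mul_smul, Units.inv_mul, one_smul] at h4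
  · -- directness
    ext t
    simp only [Submodule.mem_inf, Submodule.mem_bot]
    constructor
    · rintro ⟨htX, htY⟩
      -- t is divisible by every power of ℓ inside X ⊓ Y
      have hchain : ∀ n : ℕ, ∃ s : T, s ∈ X ∧ s ∈ Y ∧ (ℓ : ℤ_[ℓ]) ^ n • s = t := by
        intro n
        induction n with
        | zero => exact ⟨t, htX, htY, by simp⟩
        | succ n ih =>
          obtain ⟨s, hsX, hsY, hs⟩ := ih
          have hsℓ : s ∈ ℓT := by
            obtain ⟨h1, h2⟩ := hbar' s hsX s hsY rfl
            exact h1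
          obtain ⟨s', hs'⟩ := (hmemℓT s).mp hsℓ
          refine ⟨s', hpure X hX s' (hs' ▸ hsX), hpure Y hY s' (hs' ▸ hsY), ?_⟩
          rw [pow_succ, mul_smul, hs', hs]
      -- coordinates of t are divisible by all powers of ℓ
      let b := Module.Free.chooseBasis ℤ_[ℓ] T
      have hco : ∀ i, b.repr t i = 0 := by
        intro i
        refine padic_eq_zero_of_forall_pow_dvd _ (fun n => ?_)
        obtain ⟨s, -, -, hs⟩ := hchain n
        refine ⟨b.repr s i, ?_⟩
        rw [← hs, map_smul, Finsupp.smul_apply, smul_eq_mul]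
      have : b.repr t = 0 := Finsupp.ext hco
      have := b.repr.map_eq_zero_iff.mp this
      exact this
    · rintro rfl
      exact ⟨X.zero_mem, Y.zero_mem⟩
end

section
/- Let ℓ be a prime, T a free ℤ_ℓ-module of finite rank, and G a group acting ℤ_ℓ-linearly on T. Let W be a ℤ_ℓ-submodule of T stabilized by a subgroup H of G. For n ≥ 0 set W_n = W + ℓ^n T, and let S be the set of integers n ≥ 0 such that W_n is stabilized by all of G. Let N be a subset of G such that for every n ∈ S, each element g ∈ N acts on W_n/ℓW_n by a homothety (i.e., there is a scalar α ∈ ℤ_ℓ with g·w ≡ αw mod ℓW_n for all w ∈ W_n). If H together with N generates G, then G stabilizes W. [Module-theoretic content of Lemma 4.6] -/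
open Pointwise

/-- Module-theoretic content of Lemma 4.6: let `ρ` be a `ℤ_ℓ`-linear action of a group
`G` on a free `ℤ_ℓ`-module `T` of finite rank, let `W` be a submodule stabilized by a
subgroup `H`, and for `n ≥ 0` set `Wₙ = W + ℓⁿT`.  Suppose `N ⊆ G` is such that whenever
`Wₙ` is stabilized by all of `G`, every `g ∈ N` acts on `Wₙ/ℓWₙ` by a homothety.
If `H` and `N` generate `G`, then `G` stabilizes `W`. -/
theorem brumer_kramer_lemma_4_6
    {ℓ : ℕ} [Fact (Nat.Prime ℓ)] {T : Type*} [AddCommGroup T] [Module ℤ_[ℓ] T]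
    [Module.Free ℤ_[ℓ] T] [Module.Finite ℤ_[ℓ] T]
    {G : Type*} [Group G] (ρ : Representation ℤ_[ℓ] G T)
    (W : Submodule ℤ_[ℓ] T)
    (Wn : ℕ → Submodule ℤ_[ℓ] T)
    (hWn : ∀ n : ℕ, Wn n = W ⊔ (ℓ : ℤ_[ℓ]) ^ n • (⊤ : Submodule ℤ_[ℓ] T))
    (H : Subgroup G) (hH : ∀ h ∈ H, ∀ w ∈ W, ρ h w ∈ W)
    (N : Set G)
    (hN : ∀ n : ℕ, (∀ g : G, ∀ w ∈ Wn n, ρ g w ∈ Wn n) →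
      ∀ g ∈ N, ∃ α : ℤ_[ℓ], ∀ w ∈ Wn n, ρ g w - α • w ∈ (ℓ : ℤ_[ℓ]) • Wn n)
    (hgen : Subgroup.closure ((H : Set G) ∪ N) = ⊤) :
    ∀ g : G, ∀ w ∈ W, ρ g w ∈ W := by
  classical
  -- membership description of `Wn n`
  have memWn : ∀ n (x : T), x ∈ Wn n ↔ ∃ a ∈ W, ∃ t : T, x = a + (ℓ : ℤ_[ℓ]) ^ n • t := by
    intro n x
    rw [hWn n, Submodule.mem_sup]
    constructor
    · rintro ⟨a, ha, b, hb, rfl⟩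
      rw [← SetLike.mem_coe, Submodule.coe_pointwise_smul] at hb
      obtain ⟨t, -, rfl⟩ := hb
      exact ⟨a, ha, t, rfl⟩
    · rintro ⟨a, ha, t, rfl⟩
      exact ⟨a, ha, _, Submodule.smul_mem_pointwise_smul t _ ⊤ trivial, rfl⟩
  have hW_le : ∀ n, W ≤ Wn n := fun n => by rw [hWn n]; exact le_sup_left
  -- `ℓ • Wn n ≤ Wn (n+1)` and `Wn (n+1) ≤ Wn n`
  have hsmul_le : ∀ n, (ℓ : ℤ_[ℓ]) • Wn n ≤ Wn (n + 1) := by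
    intro n x hx
    rw [← SetLike.mem_coe, Submodule.coe_pointwise_smul] at hx
    obtain ⟨y, hy, rfl⟩ := hx
    obtain ⟨a, ha, t, rfl⟩ := (memWn n y).1 hy
    rw [memWn]
    refine ⟨(ℓ : ℤ_[ℓ]) • a, Submodule.smul_mem _ _ ha, t, ?_⟩
    simp [smul_add, smul_smul, pow_succ']
  have hsucc_le : ∀ n, Wn (n + 1) ≤ Wn n := by
    intro n x hx
    obtain ⟨a, ha, t, rfl⟩ := (memWn (n + 1) x).1 hx
    rw [memWn]
    exact ⟨a, ha, (ℓ : ℤ_[ℓ]) • t, by rw [smul_smul, ← pow_succ]⟩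
  -- main induction: every `Wn n` is stabilized by all of `G`
  have key : ∀ n, ∀ g : G, ∀ w ∈ Wn n, ρ g w ∈ Wn n := by
    intro n
    induction n with
    | zero =>
      have h0 : Wn 0 = ⊤ := by
        rw [hWn 0]; simp
      intro g w _; rw [h0]; trivial
    | succ n ih =>
      -- at level n, every `ρ g` maps `Wn n` onto itself
      have hsurj : ∀ g : G, ∀ w ∈ Wn n, ∃ v ∈ Wn n, ρ g v = w := by
        intro g w hw
        refine ⟨ρ g⁻¹ w, ih g⁻¹ w hw, ?_⟩
        rw [← Module.End.mul_apply, ← map_mul, mul_inv_cancel, map_one, Module.End.one_apply]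
      -- prove stabilization for generators and their inverses
      have hgens : ∀ g ∈ (H : Set G) ∪ N,
          (∀ w ∈ Wn (n + 1), ρ g w ∈ Wn (n + 1)) ∧
          (∀ w ∈ Wn (n + 1), ρ g⁻¹ w ∈ Wn (n + 1)) := by
        rintro g (hg | hg)
        · -- g ∈ H
          have stab : ∀ h ∈ H, ∀ w ∈ Wn (n + 1), ρ h w ∈ Wn (n + 1) := by
            intro h hh w hw
            obtain ⟨a, ha, t, rfl⟩ := (memWn (n + 1) w).1 hw
            rw [map_add, map_smul, memWn]
            exact ⟨ρ h a, hH h hh a ha, ρ h t, rfl⟩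
          exact ⟨stab g hg, stab g⁻¹ (H.inv_mem hg)⟩
        · -- g ∈ N
          obtain ⟨α, hα⟩ := hN n ih g hg
          by_cases hu : IsUnit α
          · constructor
            · intro w hw
              have hw' : w ∈ Wn n := hsucc_le n hw
              have h1 : ρ g w - α • w ∈ Wn (n + 1) := hsmul_le n (hα w hw')
              have h2 : α • w ∈ Wn (n + 1) := Submodule.smul_mem _ _ hw
              have := Submodule.add_mem _ h1 h2
              rwa [sub_add_cancel] at this
            · intro w hw
              obtain ⟨v, hv, rfl⟩ := hsurj g w (hsucc_le n hw)
              have hval : ρ g v - α • v ∈ Wn (n + 1) := hsmul_le n (hα v hv)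
              have h2 : α • v ∈ Wn (n + 1) := by
                have := Submodule.sub_mem _ hw hval
                rwa [sub_sub_cancel] at this
              have : ρ g⁻¹ (ρ g v) = v := by
                rw [← Module.End.mul_apply, ← map_mul, inv_mul_cancel, map_one,
                  Module.End.one_apply]
              rw [this]
              have := Submodule.smul_mem (Wn (n + 1)) (↑hu.unit⁻¹ : ℤ_[ℓ]) h2
              rwa [smul_smul, IsUnit.val_inv_mul, one_smul] at this
          · -- α is divisible by ℓ; Nakayama forces `Wn n = ⊥`
            have hdvd : (ℓ : ℤ_[ℓ]) ∣ α := by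
              have : α ∈ IsLocalRing.maximalIdeal ℤ_[ℓ] := hu
              rwa [PadicInt.maximalIdeal_eq_span_p, Ideal.mem_span_singleton] at this
            obtain ⟨β, rfl⟩ := hdvd
            have hle : Wn n ≤ (ℓ : ℤ_[ℓ]) • Wn n := by
              intro w hw
              obtain ⟨v, hv, rfl⟩ := hsurj g w hw
              have h1 := hα v hv
              have h2 : ((ℓ : ℤ_[ℓ]) * β) • v ∈ (ℓ : ℤ_[ℓ]) • Wn n := by
                rw [mul_smul]
                exact Submodule.smul_mem_pointwise_smul _ _ _ (Submodule.smul_mem _ _ hv)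
              have := Submodule.add_mem _ h1 h2
              rwa [sub_add_cancel] at this
            have hbot : Wn n = ⊥ := by
              refine Submodule.eq_bot_of_le_smul_of_le_jacobson_bot
                (Ideal.span {(ℓ : ℤ_[ℓ])}) (Wn n) (IsNoetherian.noetherian _) ?_ ?_
              · rwa [Submodule.ideal_span_singleton_smul]
              · rw [← PadicInt.maximalIdeal_eq_span_p,
                  IsLocalRing.jacobson_eq_maximalIdeal ⊥ bot_ne_top]
            have hbot' : ∀ w ∈ Wn (n + 1), w = 0 := by
              intro w hw
              have := hsucc_le n hw
              rw [hbot] at this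
              simpa using this
            constructor <;> intro w hw <;>
              simp [hbot' w hw, Submodule.zero_mem]
      -- extend from generators to all of `G` by closure induction
      intro g
      have : g ∈ Subgroup.closure ((H : Set G) ∪ N) := by rw [hgen]; trivial
      refine (Subgroup.closure_induction
        (p := fun g _ => (∀ w ∈ Wn (n + 1), ρ g w ∈ Wn (n + 1)) ∧
          (∀ w ∈ Wn (n + 1), ρ g⁻¹ w ∈ Wn (n + 1)))
        (fun g hg => hgens g hg) ?_ ?_ ?_ this).1
      · constructor <;> intro w hw <;> simpa using hw
      · rintro a b _ _ ⟨ha, ha'⟩ ⟨hb, hb'⟩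
        constructor
        · intro w hw
          have : ρ (a * b) w = ρ a (ρ b w) := by rw [map_mul, Module.End.mul_apply]
          rw [this]; exact ha _ (hb w hw)
        · intro w hw
          have : ρ (a * b)⁻¹ w = ρ b⁻¹ (ρ a⁻¹ w) := by
            rw [mul_inv_rev, map_mul, Module.End.mul_apply]
          rw [this]; exact hb' _ (ha' w hw)
      · rintro a _ ⟨ha, ha'⟩
        exact ⟨ha', by simpa using ha⟩
  -- conclude: `W = ⋂ Wn n` by Krull's intersection theorem, transferred to a
  -- universe-0 model of `T` via a basis
  intro g w hw
  have hmem : ∀ n, ρ g w ∈ Wn n := fun n => key n g w (hW_le n hw)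
  set x := ρ g w with hx
  let b := Module.finBasis ℤ_[ℓ] T
  let e : T →ₗ[ℤ_[ℓ]] (Fin (Module.finrank ℤ_[ℓ] T) → ℤ_[ℓ]) := b.equivFun.toLinearMap
  have einj : Function.Injective e := b.equivFun.injective
  set W' : Submodule ℤ_[ℓ] (Fin (Module.finrank ℤ_[ℓ] T) → ℤ_[ℓ]) :=
    W.map e with hW'
  have hq0 : ∀ i : ℕ, W'.mkQ (e x) ∈ ((IsLocalRing.maximalIdeal ℤ_[ℓ]) ^ i • ⊤ :
      Submodule ℤ_[ℓ] ((Fin (Module.finrank ℤ_[ℓ] T) → ℤ_[ℓ]) ⧸ W')) := by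
    intro i
    obtain ⟨a, ha, t, hat⟩ := (memWn i x).1 (hmem i)
    have ha0 : W'.mkQ (e a) = 0 :=
      (Submodule.Quotient.mk_eq_zero W').2 ⟨a, ha, rfl⟩
    have hex : W'.mkQ (e x) = (ℓ : ℤ_[ℓ]) ^ i • W'.mkQ (e t) := by
      rw [hat, map_add, map_smul, map_add, map_smul, ha0, zero_add]
    rw [hex]
    refine Submodule.smul_mem_smul (Ideal.pow_mem_pow ?_ i) trivial
    rw [PadicInt.maximalIdeal_eq_span_p, Ideal.mem_span_singleton]
  have hbot : (⨅ i : ℕ, (IsLocalRing.maximalIdeal ℤ_[ℓ]) ^ i • ⊤ :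
      Submodule ℤ_[ℓ] ((Fin (Module.finrank ℤ_[ℓ] T) → ℤ_[ℓ]) ⧸ W')) = ⊥ :=
    Ideal.iInf_pow_smul_eq_bot_of_isLocalRing (IsLocalRing.maximalIdeal ℤ_[ℓ])
      (Ideal.IsMaximal.ne_top (IsLocalRing.maximalIdeal.isMaximal ℤ_[ℓ]))
  have hmem' : W'.mkQ (e x) ∈ (⨅ i : ℕ, (IsLocalRing.maximalIdeal ℤ_[ℓ]) ^ i • ⊤ :
      Submodule ℤ_[ℓ] ((Fin (Module.finrank ℤ_[ℓ] T) → ℤ_[ℓ]) ⧸ W')) :=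
    Submodule.mem_iInf _ |>.2 hq0
  rw [hbot, Submodule.mem_bot] at hmem'
  have : e x ∈ W' := (Submodule.Quotient.mk_eq_zero W').1 hmem'
  obtain ⟨y, hy, hyx⟩ := this
  rwa [← einj hyx]
end

section
/- Let ℓ be a prime, T a free ℤ_ℓ-module of finite rank, and M a submodule of T. If x, y ∈ T, ℓz = x + y for some z ∈ T, and both x and y lie in pure submodules X and Y of T with X̄ ∩ Ȳ = 0 in T/ℓT, then z ∈ X + Y; consequently T/(X + Y) is torsion-free. [The key step in the proof of Lemma 3.8(iv)] -/
open Pointwise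

/-- Key step in the proof of Lemma 3.8(iv): if `X`, `Y` are pure submodules of a free
`ℤ_ℓ`-module `T` of finite rank with `X̄ ⊓ Ȳ = 0` in `T/ℓT`, then whenever `ℓz = x + y`
with `x ∈ X`, `y ∈ Y` and `z ∈ T`, one has `z ∈ X + Y`; consequently `T/(X + Y)` is
torsion-free. -/
theorem brumer_kramer_lemma_3_8_iv_key_step
    {ℓ : ℕ} [Fact (Nat.Prime ℓ)] {T : Type*} [AddCommGroup T] [Module ℤ_[ℓ] T]
    [Module.Free ℤ_[ℓ] T] [Module.Finite ℤ_[ℓ] T]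
    (X Y : Submodule ℤ_[ℓ] T)
    (hX : NoZeroSMulDivisors ℤ_[ℓ] (T ⧸ X)) (hY : NoZeroSMulDivisors ℤ_[ℓ] (T ⧸ Y))
    (ℓT : Submodule ℤ_[ℓ] T) (hℓT : ℓT = (ℓ : ℤ_[ℓ]) • (⊤ : Submodule ℤ_[ℓ] T))
    (hbar : X.map ℓT.mkQ ⊓ Y.map ℓT.mkQ = ⊥) :
    (∀ x ∈ X, ∀ y ∈ Y, ∀ z : T, (ℓ : ℤ_[ℓ]) • z = x + y → z ∈ X ⊔ Y) ∧
      NoZeroSMulDivisors ℤ_[ℓ] (T ⧸ (X ⊔ Y)) := by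
  have hℓ0 : (ℓ : ℤ_[ℓ]) ≠ 0 := by
    exact_mod_cast Nat.cast_ne_zero.mpr (Fact.out : Nat.Prime ℓ).ne_zero
  have key : ∀ x ∈ X, ∀ y ∈ Y, ∀ z : T, (ℓ : ℤ_[ℓ]) • z = x + y → z ∈ X ⊔ Y := by
    intro x hx y hy z hz
    have hxy : x + y ∈ ℓT := by
      rw [hℓT, ← hz]
      exact Submodule.smul_mem_pointwise_smul z _ _ Submodule.mem_top
    have hxbar : ℓT.mkQ x ∈ X.map ℓT.mkQ ⊓ Y.map ℓT.mkQ := by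
      constructor
      · exact ⟨x, hx, rfl⟩
      · refine ⟨-y, neg_mem hy, ?_⟩
        rw [eq_comm, Submodule.mkQ_apply, Submodule.mkQ_apply, Submodule.Quotient.eq]
        simpa [sub_neg_eq_add] using hxy
    rw [hbar, Submodule.mem_bot] at hxbar
    have hxℓ : x ∈ ℓT := by
      rwa [Submodule.mkQ_apply, Submodule.Quotient.mk_eq_zero] at hxbar
    have hyℓ : y ∈ ℓT := by
      have := ℓT.sub_mem hxy hxℓ
      simpa using this
    rw [hℓT, ← SetLike.mem_coe, Submodule.coe_pointwise_smul, Set.mem_smul_set] at hxℓ hyℓ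
    obtain ⟨a, -, ha⟩ := hxℓ
    obtain ⟨b, -, hb⟩ := hyℓ
    have pure : ∀ (W : Submodule ℤ_[ℓ] T), NoZeroSMulDivisors ℤ_[ℓ] (T ⧸ W) →
        ∀ c : T, (ℓ : ℤ_[ℓ]) • c ∈ W → c ∈ W := by
      intro W hW c hc
      have : (ℓ : ℤ_[ℓ]) • W.mkQ c = 0 := by
        rw [← map_smul, Submodule.mkQ_apply, Submodule.Quotient.mk_eq_zero]
        exact hc
      rcases smul_eq_zero.mp this with h | h
      · exact absurd h hℓ0
      · rwa [Submodule.mkQ_apply, Submodule.Quotient.mk_eq_zero] at h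
    have haX : a ∈ X := pure X hX a (by rw [ha]; exact hx)
    have hbY : b ∈ Y := pure Y hY b (by rw [hb]; exact hy)
    have hzab : z = a + b := by
      have : (ℓ : ℤ_[ℓ]) • z = (ℓ : ℤ_[ℓ]) • (a + b) := by
        rw [smul_add, ha, hb, hz]
      exact smul_right_injective T hℓ0 this
    rw [hzab]
    exact Submodule.add_mem_sup haX hbY
  refine ⟨key, ?_⟩
  have claim : ∀ n : ℕ, ∀ t : T, ((ℓ : ℤ_[ℓ]) ^ n) • t ∈ X ⊔ Y → t ∈ X ⊔ Y := by
    intro n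
    induction n with
    | zero => intro t ht; simpa using ht
    | succ n ih =>
      intro t ht
      have h1 : (ℓ : ℤ_[ℓ]) • t ∈ X ⊔ Y := by
        apply ih
        rw [smul_smul, ← pow_succ]
        exact ht
      obtain ⟨x, hx, y, hy, hxy⟩ := Submodule.mem_sup.mp h1
      exact key x hx y hy t hxy.symm
  constructor
  intro c m hcm
  by_cases hc : c = 0
  · exact Or.inl hc
  right
  obtain ⟨t, rfl⟩ := Submodule.Quotient.mk_surjective _ m
  rw [← Submodule.Quotient.mk_smul, Submodule.Quotient.mk_eq_zero] at hcm
  rw [Submodule.Quotient.mk_eq_zero]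
  obtain ⟨n, u, hcu⟩ := IsDiscreteValuationRing.eq_unit_mul_pow_irreducible hc
    PadicInt.irreducible_p
  apply claim n
  have heq : ((ℓ : ℤ_[ℓ]) ^ n) • t = (↑u⁻¹ : ℤ_[ℓ]) • (c • t) := by
    rw [smul_smul, hcu, Units.inv_mul_cancel_left]
  rw [heq]
  exact Submodule.smul_mem _ _ hcm
end
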